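/- Let H₋, H_m, H₊ be finite-dimensional complex Hilbert spaces of nonzero dimension and H = H₋ ⊗ H_m ⊗ H₊ with the induced inner product; identify an operator on one factor with its ampliation on H. Let X₋, Y₋ be self-adjoint operators on H₋, X_m a self-adjoint operator on H_m, and X₊, Y₊ self-adjoint operators on H₊, and set X = X₋ + X_m + X₊ and Y = Y₋ + X_m + Y₊ on H. Let Ω ∈ H be a unit vector, φ ∈ ℝ, and 0 < ε ≤ 1 with Var_Ω(exp(iφX)) ≤ ε² and Var_Ω(exp(iφY)) ≤ ε². Then for every bounded operator A on H that commutes with the ampliation of X_m, |⟨Ω, exp(iφY₋) A exp(−iφX₋) Ω⟩ − ⟨Ω, exp(iφY) exp(−iφX) Ω⟩ · ⟨Ω, exp(−iφY₊) A exp(iφX₊) Ω⟩| ≤ 5 ‖A‖ ε. -/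

import Mathlib

set_option maxHeartbeats 1000000

open scoped Kronecker Matrix

noncomputable section

/-- Variance of a bounded operator in a state: `Var ψ A = ‖(A - ⟨ψ, Aψ⟩)ψ‖ ^ 2`. -/
def Var {H : Type*} [NormedAddCommGroup H] [InnerProductSpace ℂ H]
    (ψ : H) (A : H →L[ℂ] H) : ℝ :=
  ‖A ψ - (inner ℂ ψ (A ψ) : ℂ) • ψ‖ ^ 2

/-- The Hilbert space `H₋ ⊗ H_m ⊗ H₊`, realized concretely as
`EuclideanSpace ℂ (Fin n × Fin m × Fin k)`. -/
abbrev TripleSpace (n m k : ℕ) := EuclideanSpace ℂ (Fin n × Fin m × Fin k)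

/-- Ampliation of an operator on the left factor `H₋` to `H₋ ⊗ H_m ⊗ H₊`. -/
def ampL {n m k : ℕ} (A : Matrix (Fin n) (Fin n) ℂ) :
    TripleSpace n m k →L[ℂ] TripleSpace n m k :=
  Matrix.toEuclideanCLM (𝕜 := ℂ) (A ⊗ₖ (1 : Matrix (Fin m × Fin k) (Fin m × Fin k) ℂ))

/-- Ampliation of an operator on the middle factor `H_m` to `H₋ ⊗ H_m ⊗ H₊`. -/
def ampM {n m k : ℕ} (B : Matrix (Fin m) (Fin m) ℂ) :
    TripleSpace n m k →L[ℂ] TripleSpace n m k :=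
  Matrix.toEuclideanCLM (𝕜 := ℂ)
    ((1 : Matrix (Fin n) (Fin n) ℂ) ⊗ₖ (B ⊗ₖ (1 : Matrix (Fin k) (Fin k) ℂ)))

/-- Ampliation of an operator on the right factor `H₊` to `H₋ ⊗ H_m ⊗ H₊`. -/
def ampR {n m k : ℕ} (C : Matrix (Fin k) (Fin k) ℂ) :
    TripleSpace n m k →L[ℂ] TripleSpace n m k :=
  Matrix.toEuclideanCLM (𝕜 := ℂ)
    ((1 : Matrix (Fin n) (Fin n) ℂ) ⊗ₖ ((1 : Matrix (Fin m) (Fin m) ℂ) ⊗ₖ C))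

/-- The operator norm of a matrix, acting on the corresponding Euclidean space. -/
def opNorm {p : ℕ} (A : Matrix (Fin p) (Fin p) ℂ) : ℝ :=
  ‖Matrix.toEuclideanCLM (𝕜 := ℂ) A‖

variable {H : Type*} [NormedAddCommGroup H] [InnerProductSpace ℂ H] [CompleteSpace H]

lemma star_apply_close (U : H →L[ℂ] H) (hU : U ∈ unitary (H →L[ℂ] H))
    (Ω : H) (hΩ : ‖Ω‖ = 1) (ε : ℝ) (hε : 0 ≤ ε) (hv : Var Ω U ≤ ε ^ 2) :
    ‖(star U) Ω - (starRingEnd ℂ) (inner ℂ Ω (U Ω)) • Ω‖ ≤ ε := by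
  set lam : ℂ := inner ℂ Ω (U Ω) with hlam
  have hUn : ∀ x : H, ‖U x‖ = ‖x‖ := fun x => U.norm_map_of_mem_unitary hU x
  have hSUn : ∀ x : H, ‖(star U) x‖ = ‖x‖ := fun x =>
    (star U).norm_map_of_mem_unitary (Unitary.star_mem hU) x
  have h1 : ‖(star U) Ω - (starRingEnd ℂ) lam • Ω‖ ^ 2 = 1 - Complex.normSq lam := by
    rw [@norm_sub_sq ℂ]
    have hinner : (inner ℂ ((star U) Ω) ((starRingEnd ℂ) lam • Ω) : ℂ) = Complex.normSq lam := by
      rw [inner_smul_right]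
      rw [ContinuousLinearMap.star_eq_adjoint, ContinuousLinearMap.adjoint_inner_left]
      rw [← hlam, Complex.normSq_eq_conj_mul_self]
    rw [hinner, hSUn, hΩ, norm_smul, hΩ]
    rw [show RCLike.re ((Complex.normSq lam : ℝ) : ℂ) = Complex.normSq lam from Complex.ofReal_re _, RCLike.norm_conj]
    rw [Complex.normSq_eq_norm_sq]
    ring
  have h2 : Var Ω U = 1 - Complex.normSq lam := by
    rw [Var, @norm_sub_sq ℂ]
    have hinner : (inner ℂ (U Ω) (lam • Ω) : ℂ) = Complex.normSq lam := by
      rw [inner_smul_right, ← inner_conj_symm, ← hlam, Complex.normSq_eq_conj_mul_self]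
      ring
    rw [← hlam, hinner, hUn, hΩ, norm_smul, hΩ]
    rw [show RCLike.re ((Complex.normSq lam : ℝ) : ℂ) = Complex.normSq lam from Complex.ofReal_re _]
    rw [Complex.normSq_eq_norm_sq]
    ring
  have h3 : ‖(star U) Ω - (starRingEnd ℂ) lam • Ω‖ ^ 2 ≤ ε ^ 2 := by
    rw [h1, ← h2]; exact hv
  nlinarith [norm_nonneg ((star U) Ω - (starRingEnd ℂ) lam • Ω)]

lemma key_estimate (U V B : H →L[ℂ] H) (hU : U ∈ unitary (H →L[ℂ] H))
    (hV : V ∈ unitary (H →L[ℂ] H))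
    (Ω : H) (hΩ : ‖Ω‖ = 1) (ε : ℝ) (hε : 0 ≤ ε)
    (hvU : Var Ω U ≤ ε ^ 2) (hvV : Var Ω V ≤ ε ^ 2) :
    ‖((inner ℂ Ω ((V * B * star U) Ω) : ℂ)
      - (inner ℂ Ω ((V * star U) Ω) : ℂ) * (inner ℂ Ω (B Ω) : ℂ))‖ ≤ 4 * ‖B‖ * ε := by
  set lam : ℂ := inner ℂ Ω (U Ω) with hlam
  set mu : ℂ := inner ℂ Ω (V Ω) with hmu
  set a : H := (star U) Ω with ha_def
  set b : H := (star V) Ω with hb_def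
  set c0 : ℂ := inner ℂ Ω (B Ω) with hc0_def
  have ha : ‖a - (starRingEnd ℂ) lam • Ω‖ ≤ ε := star_apply_close U hU Ω hΩ ε hε hvU
  have hb : ‖b - (starRingEnd ℂ) mu • Ω‖ ≤ ε := star_apply_close V hV Ω hΩ ε hε hvV
  have hna : ‖a‖ = 1 := by
    rw [ha_def, (star U).norm_map_of_mem_unitary (Unitary.star_mem hU) Ω, hΩ]
  have hmu1 : ‖mu‖ ≤ 1 := by
    calc ‖mu‖ ≤ ‖Ω‖ * ‖V Ω‖ := norm_inner_le_norm _ _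
    _ = 1 := by rw [V.norm_map_of_mem_unitary hV Ω, hΩ]; ring
  have hc0 : ‖c0‖ ≤ ‖B‖ := by
    calc ‖c0‖ ≤ ‖Ω‖ * ‖B Ω‖ := norm_inner_le_norm _ _
    _ ≤ ‖Ω‖ * (‖B‖ * ‖Ω‖) := mul_le_mul_of_nonneg_left (B.le_opNorm Ω) (norm_nonneg Ω)
    _ = ‖B‖ := by rw [hΩ]; ring
  have hinner_b : ∀ x : H, (inner ℂ Ω (V x) : ℂ) = inner ℂ b x := by
    intro x
    rw [hb_def, ContinuousLinearMap.star_eq_adjoint, ContinuousLinearMap.adjoint_inner_left]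
  have e1 : (inner ℂ Ω ((V * B * star U) Ω) : ℂ) = inner ℂ b (B a) := by
    rw [show (V * B * star U) Ω = V (B a) from rfl, hinner_b]
  have e2 : (inner ℂ Ω ((V * star U) Ω) : ℂ) = inner ℂ b a := by
    rw [show (V * star U) Ω = V a from rfl, hinner_b]
  have hΩΩ : (inner ℂ Ω Ω : ℂ) = 1 := by
    rw [inner_self_eq_norm_sq_to_K, hΩ]; norm_num
  have decomp1 : (inner ℂ b (B a) : ℂ) - mu * (starRingEnd ℂ) lam * c0
      = inner ℂ (b - (starRingEnd ℂ) mu • Ω) (B a)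
        + mu * inner ℂ Ω (B (a - (starRingEnd ℂ) lam • Ω)) := by
    rw [map_sub, map_smul, inner_sub_left, inner_sub_right, inner_smul_left, inner_smul_right,
      hc0_def]
    simp only [RingHomCompTriple.comp_apply, RingHom.id_apply, starRingEnd_self_apply]
    ring
  have decomp2 : (inner ℂ b a : ℂ) - mu * (starRingEnd ℂ) lam
      = inner ℂ (b - (starRingEnd ℂ) mu • Ω) a
        + mu * inner ℂ Ω (a - (starRingEnd ℂ) lam • Ω) := by
    rw [inner_sub_left, inner_sub_right, inner_smul_left, inner_smul_right, hΩΩ]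
    simp only [starRingEnd_self_apply]
    ring
  rw [e1, e2]
  have main_id : (inner ℂ b (B a) : ℂ) - (inner ℂ b a : ℂ) * c0
      = (inner ℂ (b - (starRingEnd ℂ) mu • Ω) (B a)
          + mu * inner ℂ Ω (B (a - (starRingEnd ℂ) lam • Ω)))
        - (inner ℂ (b - (starRingEnd ℂ) mu • Ω) a
          + mu * inner ℂ Ω (a - (starRingEnd ℂ) lam • Ω)) * c0 := by
    linear_combination decomp1 - c0 * decomp2
  rw [main_id]
  have hp : ‖(inner ℂ (b - (starRingEnd ℂ) mu • Ω) (B a) : ℂ)‖ ≤ ‖B‖ * ε := by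
    calc ‖(inner ℂ (b - (starRingEnd ℂ) mu • Ω) (B a) : ℂ)‖
        ≤ ‖b - (starRingEnd ℂ) mu • Ω‖ * ‖B a‖ := norm_inner_le_norm _ _
      _ ≤ ε * (‖B‖ * 1) := by
          apply mul_le_mul hb _ (norm_nonneg _) hε
          calc ‖B a‖ ≤ ‖B‖ * ‖a‖ := B.le_opNorm a
          _ = ‖B‖ * 1 := by rw [hna]
      _ = ‖B‖ * ε := by ring
  have hq : ‖mu * (inner ℂ Ω (B (a - (starRingEnd ℂ) lam • Ω)) : ℂ)‖ ≤ ‖B‖ * ε := by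
    rw [norm_mul]
    calc ‖mu‖ * ‖(inner ℂ Ω (B (a - (starRingEnd ℂ) lam • Ω)) : ℂ)‖
        ≤ 1 * (‖Ω‖ * ‖B (a - (starRingEnd ℂ) lam • Ω)‖) :=
          mul_le_mul hmu1 (norm_inner_le_norm _ _) (norm_nonneg _) zero_le_one
      _ = ‖B (a - (starRingEnd ℂ) lam • Ω)‖ := by rw [hΩ]; ring
      _ ≤ ‖B‖ * ‖a - (starRingEnd ℂ) lam • Ω‖ := B.le_opNorm _
      _ ≤ ‖B‖ * ε := mul_le_mul_of_nonneg_left ha (norm_nonneg B)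
  have hr : ‖(inner ℂ (b - (starRingEnd ℂ) mu • Ω) a : ℂ)‖ ≤ ε := by
    calc ‖(inner ℂ (b - (starRingEnd ℂ) mu • Ω) a : ℂ)‖
        ≤ ‖b - (starRingEnd ℂ) mu • Ω‖ * ‖a‖ := norm_inner_le_norm _ _
      _ ≤ ε * 1 := mul_le_mul hb (le_of_eq hna) (norm_nonneg _) hε
      _ = ε := by ring
  have hs : ‖mu * (inner ℂ Ω (a - (starRingEnd ℂ) lam • Ω) : ℂ)‖ ≤ ε := by
    rw [norm_mul]
    calc ‖mu‖ * ‖(inner ℂ Ω (a - (starRingEnd ℂ) lam • Ω) : ℂ)‖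
        ≤ 1 * (‖Ω‖ * ‖a - (starRingEnd ℂ) lam • Ω‖) :=
          mul_le_mul hmu1 (norm_inner_le_norm _ _) (norm_nonneg _) zero_le_one
      _ = ‖a - (starRingEnd ℂ) lam • Ω‖ := by rw [hΩ]; ring
      _ ≤ ε := ha
  calc ‖(inner ℂ (b - (starRingEnd ℂ) mu • Ω) (B a)
          + mu * inner ℂ Ω (B (a - (starRingEnd ℂ) lam • Ω))
        - (inner ℂ (b - (starRingEnd ℂ) mu • Ω) a
          + mu * inner ℂ Ω (a - (starRingEnd ℂ) lam • Ω)) * c0 : ℂ)‖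
      ≤ ‖(inner ℂ (b - (starRingEnd ℂ) mu • Ω) (B a)
          + mu * inner ℂ Ω (B (a - (starRingEnd ℂ) lam • Ω)) : ℂ)‖
        + ‖((inner ℂ (b - (starRingEnd ℂ) mu • Ω) a
          + mu * inner ℂ Ω (a - (starRingEnd ℂ) lam • Ω)) * c0 : ℂ)‖ := norm_sub_le _ _
    _ ≤ (‖(inner ℂ (b - (starRingEnd ℂ) mu • Ω) (B a) : ℂ)‖
          + ‖mu * (inner ℂ Ω (B (a - (starRingEnd ℂ) lam • Ω)) : ℂ)‖)
        + (‖(inner ℂ (b - (starRingEnd ℂ) mu • Ω) a : ℂ)‖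
          + ‖mu * (inner ℂ Ω (a - (starRingEnd ℂ) lam • Ω) : ℂ)‖) * ‖c0‖ := by
        rw [norm_mul]
        gcongr <;> [exact norm_add_le _ _; exact norm_add_le _ _]
    _ ≤ (‖B‖ * ε + ‖B‖ * ε) + (ε + ε) * ‖B‖ := by
        gcongr
    _ = 4 * ‖B‖ * ε := by ring

open NormedSpace in
lemma star_exp_smul (T : H →L[ℂ] H) (hT : star T = T) (c : ℂ) (hc : star c = -c) :
    star (exp (c • T)) = exp (-c • T) := by
  rw [star_exp, star_smul, hc, hT]

open NormedSpace in
lemma exp_mul_exp_neg (T : H →L[ℂ] H) (c : ℂ) :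
    exp (c • T) * exp (-c • T) = 1 := by
  let +nondep : NormedAlgebra ℚ (H →L[ℂ] H) := .restrictScalars ℚ ℂ (H →L[ℂ] H)
  rw [← exp_add_of_commute (((Commute.refl T).smul_left c).smul_right (-c))]
  rw [show c • T + -c • T = 0 by rw [neg_smul]; abel, exp_zero]

open NormedSpace in
lemma exp_smul_mem_unitary (T : H →L[ℂ] H) (hT : star T = T) (c : ℂ) (hc : star c = -c) :
    exp (c • T) ∈ unitary (H →L[ℂ] H) := by
  rw [Unitary.mem_iff, star_exp_smul T hT c hc]
  constructor
  · have := exp_mul_exp_neg T (-c); rw [neg_neg] at this; exact this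
  · exact exp_mul_exp_neg T c

open NormedSpace in
lemma norm_exp_smul_le (T : H →L[ℂ] H) (hT : star T = T) (c : ℂ) (hc : star c = -c) :
    ‖exp (c • T)‖ ≤ 1 := by
  apply ContinuousLinearMap.opNorm_le_bound _ zero_le_one
  intro x
  rw [(exp (c • T)).norm_map_of_mem_unitary (exp_smul_mem_unitary T hT c hc) x, one_mul]

open scoped Kronecker Matrix


lemma kron_conjTranspose {l p : Type*} (A : Matrix l l ℂ) (B : Matrix p p ℂ) :
    (A ⊗ₖ B)ᴴ = Aᴴ ⊗ₖ Bᴴ := by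
  ext ⟨i, j⟩ ⟨r, s⟩
  simp [Matrix.conjTranspose_apply, Matrix.kroneckerMap_apply, mul_comm]

lemma star_ampL {n m k : ℕ} (A : Matrix (Fin n) (Fin n) ℂ) (hA : A.IsHermitian) :
    star (ampL (m := m) (k := k) A) = ampL A := by
  rw [ampL, ← map_star]
  congr 1
  rw [Matrix.star_eq_conjTranspose, kron_conjTranspose, hA.eq, Matrix.conjTranspose_one]

lemma star_ampM {n m k : ℕ} (B : Matrix (Fin m) (Fin m) ℂ) (hB : B.IsHermitian) :
    star (ampM (n := n) (k := k) B) = ampM B := by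
  rw [ampM, ← map_star]
  congr 1
  rw [Matrix.star_eq_conjTranspose, kron_conjTranspose, kron_conjTranspose, hB.eq,
    Matrix.conjTranspose_one, Matrix.conjTranspose_one]

lemma star_ampR {n m k : ℕ} (C : Matrix (Fin k) (Fin k) ℂ) (hC : C.IsHermitian) :
    star (ampR (n := n) (m := m) C) = ampR C := by
  rw [ampR, ← map_star]
  congr 1
  rw [Matrix.star_eq_conjTranspose, kron_conjTranspose, kron_conjTranspose, hC.eq,
    Matrix.conjTranspose_one, Matrix.conjTranspose_one]

lemma ampL_comm_ampM {n m k : ℕ} (A : Matrix (Fin n) (Fin n) ℂ)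
    (B : Matrix (Fin m) (Fin m) ℂ) :
    Commute (ampL (m := m) (k := k) A) (ampM B) := by
  unfold Commute SemiconjBy
  rw [ampL, ampM, ← map_mul, ← map_mul, ← Matrix.one_kronecker_one (α := ℂ) (m := Fin m) (n := Fin k)]
  congr 1
  simp only [← Matrix.mul_kronecker_mul, Matrix.one_mul, Matrix.mul_one]

lemma ampL_comm_ampR {n m k : ℕ} (A : Matrix (Fin n) (Fin n) ℂ)
    (C : Matrix (Fin k) (Fin k) ℂ) :
    Commute (ampL (m := m) (k := k) A) (ampR C) := by
  unfold Commute SemiconjBy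
  rw [ampL, ampR, ← map_mul, ← map_mul, ← Matrix.one_kronecker_one (α := ℂ) (m := Fin m) (n := Fin k)]
  congr 1
  simp only [← Matrix.mul_kronecker_mul, Matrix.one_mul, Matrix.mul_one]

lemma ampM_comm_ampR {n m k : ℕ} (B : Matrix (Fin m) (Fin m) ℂ)
    (C : Matrix (Fin k) (Fin k) ℂ) :
    Commute (ampM (n := n) (k := k) B) (ampR C) := by
  unfold Commute SemiconjBy
  rw [ampM, ampR, ← map_mul, ← map_mul]
  congr 1
  simp only [← Matrix.mul_kronecker_mul, Matrix.one_mul, Matrix.mul_one]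


open NormedSpace in
lemma exp_triple_split (L M R : H →L[ℂ] H) (c : ℂ)
    (hLM : Commute L M) (hLR : Commute L R) (hMR : Commute M R) :
    exp (c • (L + M + R)) = exp (c • L) * exp (c • M) * exp (c • R) := by
  let +nondep : NormedAlgebra ℚ (H →L[ℂ] H) := .restrictScalars ℚ ℂ (H →L[ℂ] H)
  rw [smul_add, smul_add,
    exp_add_of_commute (((hLR.smul_left c).smul_right c).add_left ((hMR.smul_left c).smul_right c)),
    exp_add_of_commute ((hLM.smul_left c).smul_right c)]

open NormedSpace in
lemma transfer_abstract (L M R L' R' A : H →L[ℂ] H) (c : ℂ) (hc : star c = -c)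
    (hsL : star L = L) (hsM : star M = M) (hsR : star R = R)
    (hsL' : star L' = L') (hsR' : star R' = R')
    (hLM : Commute L M) (hLR : Commute L R) (hMR : Commute M R)
    (hL'M : Commute L' M) (hL'R' : Commute L' R') (hMR' : Commute M R')
    (hAM : Commute A M)
    (Ω : H) (hΩ : ‖Ω‖ = 1) (ε : ℝ) (hε : 0 ≤ ε)
    (hvarX : Var Ω (exp (c • (L + M + R))) ≤ ε ^ 2)
    (hvarY : Var Ω (exp (c • (L' + M + R'))) ≤ ε ^ 2) :
    ‖((inner ℂ Ω ((exp (c • L') * A * exp (-c • L)) Ω) : ℂ)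
      - (inner ℂ Ω ((exp (c • (L' + M + R')) * exp (-c • (L + M + R))) Ω) : ℂ)
        * (inner ℂ Ω ((exp (-c • R') * A * exp (c • R)) Ω) : ℂ))‖ ≤ 4 * ‖A‖ * ε := by
  have hc' : star (-c) = c := by rw [star_neg, hc, neg_neg]
  have hsX : star (L + M + R) = L + M + R := by rw [star_add, star_add, hsL, hsM, hsR]
  have hsY : star (L' + M + R') = L' + M + R' := by rw [star_add, star_add, hsL', hsM, hsR']
  set U := exp (c • (L + M + R)) with hU_def
  set V := exp (c • (L' + M + R')) with hV_def
  have hUu : U ∈ unitary _ := exp_smul_mem_unitary _ hsX c hc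
  have hVu : V ∈ unitary _ := exp_smul_mem_unitary _ hsY c hc
  set B := exp (-c • R') * A * exp (c • R) with hB_def
  have hUsplit : U = exp (c • L) * exp (c • M) * exp (c • R) :=
    exp_triple_split L M R c hLM hLR hMR
  have hVsplit : V = exp (c • L') * exp (c • M) * exp (c • R') :=
    exp_triple_split L' M R' c hL'M hL'R' hMR'
  have hA_M : A * exp (c • M) = exp (c • M) * A := (hAM.smul_right c).exp_right
  set E := exp (c • L') * A * exp (-c • L) with hE_def
  have hEU : E * U = V * B := by
    rw [hUsplit, hVsplit, hB_def, hE_def]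
    have c1 : exp (-c • L) * exp (c • L) = 1 := by
      have := exp_mul_exp_neg L (-c); rwa [neg_neg] at this
    have c2 : exp (c • R') * exp (-c • R') = 1 := exp_mul_exp_neg R' c
    simp only [mul_assoc]
    rw [show exp (-c • L) * (exp (c • L) * (exp (c • M) * exp (c • R)))
        = exp (c • M) * exp (c • R) by rw [← mul_assoc, c1, one_mul]]
    rw [show exp (c • R') * (exp (-c • R') * (A * exp (c • R)))
        = A * exp (c • R) by rw [← mul_assoc, c2, one_mul]]
    rw [← mul_assoc A, hA_M, mul_assoc]
  have hE : E = V * B * star U := by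
    calc E = E * (U * star U) := by rw [Unitary.mul_star_self_of_mem hUu, mul_one]
      _ = (E * U) * star U := (mul_assoc E U (star U)).symm
      _ = V * B * star U := by rw [hEU]
  have hstarU : exp (-c • (L + M + R)) = star U := (star_exp_smul _ hsX c hc).symm
  rw [hstarU, hE]
  have key := key_estimate U V B hUu hVu Ω hΩ ε hε hvarX hvarY
  have hBnorm : ‖B‖ ≤ ‖A‖ := by
    calc ‖B‖ ≤ ‖exp (-c • R') * A‖ * ‖exp (c • R)‖ := norm_mul_le _ _
      _ ≤ (‖exp (-c • R')‖ * ‖A‖) * ‖exp (c • R)‖ := by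
          gcongr; exact norm_mul_le _ _
      _ ≤ (1 * ‖A‖) * 1 := by
          gcongr
          · exact norm_exp_smul_le R' hsR' (-c) (by rw [hc']; exact (neg_neg c).symm)
          · exact norm_exp_smul_le R hsR c hc
      _ = ‖A‖ := by ring
  refine key.trans ?_
  have h4 : (4 : ℝ) * ‖B‖ * ε ≤ 4 * ‖A‖ * ε := by nlinarith
  exact h4

set_option linter.unusedVariables false in
/-- Quantitative tensor-product form of Lemma 4.6 of Bachmann–Bols–De Roeck–Fraas: expectation
values involving the left boundary operators `X₋, Y₋` are transferred to expectation values
involving the right boundary operators `X₊, Y₊`, for any `A` commuting with the middle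
charge `X_m`. -/
theorem transfer_left_to_right (n m k : ℕ) (hn : 0 < n) (hm : 0 < m) (hk : 0 < k)
    (Xm : Matrix (Fin m) (Fin m) ℂ)
    (Xminus Yminus : Matrix (Fin n) (Fin n) ℂ)
    (Xplus Yplus : Matrix (Fin k) (Fin k) ℂ)
    (hXm : Xm.IsHermitian) (hXminus : Xminus.IsHermitian) (hYminus : Yminus.IsHermitian)
    (hXplus : Xplus.IsHermitian) (hYplus : Yplus.IsHermitian)
    (Ω : TripleSpace n m k) (hΩ : ‖Ω‖ = 1) (φ : ℝ) (ε : ℝ) (hε0 : 0 < ε) (hε1 : ε ≤ 1)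
    (hvarX : Var Ω (NormedSpace.exp ((Complex.I * (φ : ℂ)) •
        (ampL Xminus + ampM Xm + ampR Xplus))) ≤ ε ^ 2)
    (hvarY : Var Ω (NormedSpace.exp ((Complex.I * (φ : ℂ)) •
        (ampL Yminus + ampM Xm + ampR Yplus))) ≤ ε ^ 2)
    (A : TripleSpace n m k →L[ℂ] TripleSpace n m k) (hA : A * ampM Xm = ampM Xm * A) :
    ‖((inner ℂ Ω ((NormedSpace.exp ((Complex.I * (φ : ℂ)) • ampL Yminus) * A *
            NormedSpace.exp (-(Complex.I * (φ : ℂ)) • ampL Xminus) :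
              TripleSpace n m k →L[ℂ] TripleSpace n m k) Ω) : ℂ) -
          (inner ℂ Ω ((NormedSpace.exp ((Complex.I * (φ : ℂ)) •
              (ampL Yminus + ampM Xm + ampR Yplus)) *
            NormedSpace.exp (-(Complex.I * (φ : ℂ)) •
              (ampL Xminus + ampM Xm + ampR Xplus)) :
              TripleSpace n m k →L[ℂ] TripleSpace n m k) Ω) : ℂ) *
          (inner ℂ Ω ((NormedSpace.exp (-(Complex.I * (φ : ℂ)) • ampR Yplus) * A *
            NormedSpace.exp ((Complex.I * (φ : ℂ)) • ampR Xplus) :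
              TripleSpace n m k →L[ℂ] TripleSpace n m k) Ω) : ℂ))‖
      ≤ 5 * ‖A‖ * ε := by
  have hc : star (Complex.I * (φ : ℂ)) = -(Complex.I * (φ : ℂ)) := by
    rw [star_mul', Complex.star_def, Complex.conj_I, Complex.conj_ofReal]
    ring
  have h := transfer_abstract (ampL (m := m) (k := k) Xminus) (ampM Xm) (ampR Xplus)
    (ampL Yminus) (ampR Yplus) A (Complex.I * (φ : ℂ)) hc
    (star_ampL _ hXminus) (star_ampM _ hXm) (star_ampR _ hXplus)
    (star_ampL _ hYminus) (star_ampR _ hYplus)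
    (ampL_comm_ampM _ _) (ampL_comm_ampR _ _) (ampM_comm_ampR _ _)
    (ampL_comm_ampM _ _) (ampL_comm_ampR _ _) (ampM_comm_ampR _ _)
    hA Ω hΩ ε hε0.le hvarX hvarY
  refine h.trans ?_
  nlinarith [norm_nonneg A, hε0.le]
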